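/- arXiv:1307.0597 — 2 statements merged into one kernel-verified Lean document; each statement's English description precedes it below -/
import Mathlib

section
/- Let U be a nonempty unit-candidate contained in a homogeneous part A of a network satisfying the standing assumptions. Then the map assigning to each homogeneous part B with Δ_{U,B} ≠ 0 the unique neuron i ∈ U with Δ_{i,B} ≠ 0 is well-defined and surjective onto U; consequently |U| ≤ #{homogeneous parts B : Δ_{U,B} ≠ 0}, and every such part B is distinct from A. (Counting argument in the proof of Proposition 'Units', part (iii).) -/
namespace NeuralNet

open Classical

/-- Neurons `i` and `j` are *structurally identical*: `i = j`, or else the intrinsic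
dynamics labels coincide, the mutual synaptic actions vanish, and every other neuron
acts equally on both. -/
def StructId {α : Type*} {N : ℕ} (F : Fin N → α) (Δ : Fin N → Fin N → ℝ)
    (i j : Fin N) : Prop :=
  i = j ∨ (F i = F j ∧ Δ i j = 0 ∧ Δ j i = 0 ∧ ∀ h, h ≠ i → h ≠ j → Δ h i = Δ h j)

/-- A *homogeneous part* is an equivalence class of the structural-identity relation. -/
def IsHomPart {α : Type*} {N : ℕ} (F : Fin N → α) (Δ : Fin N → Fin N → ℝ)
    (A : Set (Fin N)) : Prop :=
  ∃ i, A = {j | StructId F Δ i j}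

/-- A subset `U` of a homogeneous part `A` is a *unit-candidate* if for every neuron
`h ∉ A` there is at most one `i ∈ U` with `Δ i h ≠ 0`. -/
def UnitCandidate {N : ℕ} (Δ : Fin N → Fin N → ℝ) (A U : Set (Fin N)) : Prop :=
  U ⊆ A ∧ ∀ h ∉ A, ∀ i ∈ U, ∀ j ∈ U, Δ i h ≠ 0 → Δ j h ≠ 0 → i = j

/-- A partition of the homogeneous part `A` into nonempty unit-candidates. -/
def IsUnitPartition {N : ℕ} (Δ : Fin N → Fin N → ℝ) (A : Set (Fin N))
    (P : Set (Set (Fin N))) : Prop :=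
  (∀ U ∈ P, U.Nonempty ∧ UnitCandidate Δ A U) ∧ P.PairwiseDisjoint id ∧ ⋃₀ P = A

/-- A *synaptical unit* is a member of a partition of some homogeneous part `A` into
nonempty unit-candidates whose number of parts is minimal. -/
def IsSynapticalUnit {α : Type*} {N : ℕ} (F : Fin N → α) (Δ : Fin N → Fin N → ℝ)
    (U : Set (Fin N)) : Prop :=
  ∃ A P, IsHomPart F Δ A ∧ IsUnitPartition Δ A P ∧
    (∀ Q, IsUnitPartition Δ A Q → P.ncard ≤ Q.ncard) ∧ U ∈ P

/-- `deltaIB Δ i B` : the common value of `Δ i h` over `h ∈ B` (defined by choice of a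
representative of `B`; it is well-defined when `B` is a homogeneous part). -/
noncomputable def deltaIB {N : ℕ} (Δ : Fin N → Fin N → ℝ) (i : Fin N)
    (B : Set (Fin N)) : ℝ :=
  if hB : B.Nonempty then Δ i hB.choose else 0

/-- `deltaUB Δ U B` : the inter-unit weight `Δ_{U,B}`; it is `0` if `deltaIB Δ i B = 0`
for every `i ∈ U`, and otherwise the value `deltaIB Δ i B` for a chosen `i ∈ U` with
nonzero value (unique when `U` is a unit-candidate and `B` a homogeneous part). -/
noncomputable def deltaUB {N : ℕ} (Δ : Fin N → Fin N → ℝ) (U B : Set (Fin N)) : ℝ :=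
  if h : ∃ i ∈ U, deltaIB Δ i B ≠ 0 then deltaIB Δ h.choose B else 0

/-- Neuron `i` is *excitatory*. -/
def Excitatory {N : ℕ} (Δ : Fin N → Fin N → ℝ) (i : Fin N) : Prop :=
  (∀ j, 0 ≤ Δ i j) ∧ ∃ j, 0 < Δ i j

/-- Neuron `i` is *inhibitory*. -/
def Inhibitory {N : ℕ} (Δ : Fin N → Fin N → ℝ) (i : Fin N) : Prop :=
  (∀ j, Δ i j ≤ 0) ∧ ∃ j, Δ i j < 0

/-- Neuron `i` is *mixed*. -/
def Mixed {N : ℕ} (Δ : Fin N → Fin N → ℝ) (i : Fin N) : Prop :=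
  (∃ j, 0 < Δ i j) ∧ ∃ j, Δ i j < 0

/-- The image of a homogeneous part `B` under the unit bijection `φ`: the union of the
images of the units of `P` contained in `B`. -/
def partImage {N N' : ℕ} (P : Set (Set (Fin N))) (φ : Set (Fin N) → Set (Fin N'))
    (B : Set (Fin N)) : Set (Fin N') :=
  {i' | ∃ U ∈ P, U ⊆ B ∧ i' ∈ φ U}

/-- The networks `(F, Δ)` on `Fin N` and `(F', Δ')` on `Fin N'` are *synaptically
equivalent*: there are partitions of each set of neurons into synaptical units and a
bijection `φ` between them preserving homogeneous parts, inter-unit weights, and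
intrinsic dynamics labels. -/
def SynEquiv {α : Type*} {N N' : ℕ} (F : Fin N → α) (Δ : Fin N → Fin N → ℝ)
    (F' : Fin N' → α) (Δ' : Fin N' → Fin N' → ℝ) : Prop :=
  ∃ (P : Set (Set (Fin N))) (P' : Set (Set (Fin N')))
    (φ : Set (Fin N) → Set (Fin N')),
    (∀ U ∈ P, IsSynapticalUnit F Δ U) ∧ P.PairwiseDisjoint id ∧ ⋃₀ P = Set.univ ∧
    (∀ U' ∈ P', IsSynapticalUnit F' Δ' U') ∧ P'.PairwiseDisjoint id ∧
      ⋃₀ P' = Set.univ ∧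
    Set.BijOn φ P P' ∧
    (∀ U ∈ P, ∀ V ∈ P,
      ((∃ A, IsHomPart F Δ A ∧ U ⊆ A ∧ V ⊆ A) ↔
        (∃ A', IsHomPart F' Δ' A' ∧ φ U ⊆ A' ∧ φ V ⊆ A'))) ∧
    (∀ U ∈ P, ∀ B, IsHomPart F Δ B →
      deltaUB Δ U B = deltaUB Δ' (φ U) (partImage P φ B)) ∧
    (∀ U ∈ P, ∀ i ∈ U, ∀ i' ∈ φ U, F i = F' i')

/-- The labels of the *split network* obtained by splitting the mixed neuron `i`. -/
def splitF {α : Type*} {N : ℕ} (F : Fin N → α) (i : Fin N) : Fin (N + 1) → α :=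
  fun j => if hj : (j : ℕ) < N then F ⟨j, hj⟩ else F i

/-- The synaptic actions of the *split network* obtained by splitting the mixed neuron
`i`: neuron `i` keeps the positive parts of its actions, the new neuron `N` gets the
negative parts, and the new neuron receives exactly what `i` receives. -/
def splitΔ {N : ℕ} (Δ : Fin N → Fin N → ℝ) (i : Fin N) :
    Fin (N + 1) → Fin (N + 1) → ℝ := fun j h =>
  if hj : (j : ℕ) < N then
    if hh : (h : ℕ) < N then
      if (⟨j, hj⟩ : Fin N) = i then max (Δ i ⟨h, hh⟩) 0 else Δ ⟨j, hj⟩ ⟨h, hh⟩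
    else
      if (⟨j, hj⟩ : Fin N) = i then 0 else Δ ⟨j, hj⟩ i
  else
    if hh : (h : ℕ) < N then
      if (⟨h, hh⟩ : Fin N) = i then 0 else min (Δ i ⟨h, hh⟩) 0
    else 0


section Aux

variable {α : Type*} {N : ℕ} {F : Fin N → α} {Δ : Fin N → Fin N → ℝ}

lemma structId_refl (i : Fin N) : StructId F Δ i i := Or.inl rfl

lemma structId_symm {i j : Fin N} (h : StructId F Δ i j) : StructId F Δ j i := by
  rcases h with rfl | ⟨hF, a, b, c⟩
  · exact Or.inl rfl
  · exact Or.inr ⟨hF.symm, b, a, fun h hj hi => (c h hi hj).symm⟩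

lemma structId_trans {i j k : Fin N} (h1 : StructId F Δ i j) (h2 : StructId F Δ j k) :
    StructId F Δ i k := by
  by_cases hij : i = j
  · subst hij; exact h2
  by_cases hjk : j = k
  · subst hjk; exact h1
  by_cases hik : i = k
  · exact Or.inl hik
  rcases h1 with h1 | ⟨hF1, a1, b1, c1⟩
  · exact absurd h1 hij
  rcases h2 with h2 | ⟨hF2, a2, b2, c2⟩
  · exact absurd h2 hjk
  refine Or.inr ⟨hF1.trans hF2, ?_, ?_, ?_⟩
  · rw [← c2 i hij hik]; exact a1
  · rw [c1 k (Ne.symm hik) (Ne.symm hjk)]; exact b2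
  · intro h hhi hhk
    by_cases hhj : h = j
    · subst hhj; rw [b1, a2]
    · rw [c1 h hhi hhj, c2 h hhj hhk]

lemma delta_const (hdiag : ∀ i, Δ i i = 0) {h h' : Fin N} (i : Fin N)
    (hs : StructId F Δ h h') : Δ i h = Δ i h' := by
  rcases hs with rfl | ⟨_, a, b, c⟩
  · rfl
  · by_cases e1 : i = h
    · subst e1; rw [hdiag, a]
    · by_cases e2 : i = h'
      · subst e2; rw [hdiag, b]
      · exact c i e1 e2

lemma deltaIB_eq (hdiag : ∀ i, Δ i i = 0) {B : Set (Fin N)} (hB : IsHomPart F Δ B)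
    {h : Fin N} (hh : h ∈ B) (i : Fin N) : deltaIB Δ i B = Δ i h := by
  obtain ⟨b, rfl⟩ := hB
  have hne : Set.Nonempty {j | StructId F Δ b j} := ⟨h, hh⟩
  rw [deltaIB, dif_pos hne]
  exact delta_const hdiag i (structId_trans (structId_symm hne.choose_spec) hh)

lemma homPart_eq {A B : Set (Fin N)} (hA : IsHomPart F Δ A) (hB : IsHomPart F Δ B)
    {h : Fin N} (hhA : h ∈ A) (hhB : h ∈ B) : A = B := by
  obtain ⟨a, rfl⟩ := hA
  obtain ⟨b, rfl⟩ := hB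
  ext x
  simp only [Set.mem_setOf_eq] at *
  constructor
  · intro hx; exact structId_trans hhB (structId_trans (structId_symm hhA) hx)
  · intro hx; exact structId_trans hhA (structId_trans (structId_symm hhB) hx)

end Aux

/-- for a nonempty unit-candidate `U ⊆ A`, the map sending each homogeneous
part `B` with `Δ_{U,B} ≠ 0` to the unique `i ∈ U` with `Δ_{i,B} ≠ 0` is well-defined and
surjective onto `U`; hence `|U| ≤ #{B : Δ_{U,B} ≠ 0}`, and every such `B` differs
from `A`. -/
theorem unit_counting {α : Type*} {N : ℕ} (F : Fin N → α)
    (Δ : Fin N → Fin N → ℝ) (hN : 2 ≤ N) (hdiag : ∀ i, Δ i i = 0) (hnind : ∀ i, ∃ j, Δ i j ≠ 0)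
    (A U : Set (Fin N)) (hA : IsHomPart F Δ A) (hUA : UnitCandidate Δ A U)
    (hUne : U.Nonempty) :
    (∀ B, IsHomPart F Δ B → deltaUB Δ U B ≠ 0 →
      ∃! i, i ∈ U ∧ deltaIB Δ i B ≠ 0) ∧
    (∀ i ∈ U, ∃ B, IsHomPart F Δ B ∧ deltaUB Δ U B ≠ 0 ∧ deltaIB Δ i B ≠ 0) ∧
    U.ncard ≤ {B : Set (Fin N) | IsHomPart F Δ B ∧ deltaUB Δ U B ≠ 0}.ncard ∧
    (∀ B, IsHomPart F Δ B → deltaUB Δ U B ≠ 0 → B ≠ A) := by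
  -- Key: the unique-neuron statement
  have key : ∀ B, IsHomPart F Δ B → deltaUB Δ U B ≠ 0 →
      ∃! i, i ∈ U ∧ deltaIB Δ i B ≠ 0 := by
    intro B hB hUB
    have hex : ∃ i ∈ U, deltaIB Δ i B ≠ 0 := by
      by_contra hcon
      rw [deltaUB, dif_neg hcon] at hUB
      exact hUB rfl
    obtain ⟨i, hiU, hiB⟩ := hex
    refine ⟨i, ⟨hiU, hiB⟩, ?_⟩
    rintro j ⟨hjU, hjB⟩
    -- B is nonempty
    obtain ⟨b, rfl⟩ := hB
    have hbB : b ∈ {j | StructId F Δ b j} := structId_refl b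
    have hB' : IsHomPart F Δ {j | StructId F Δ b j} := ⟨b, rfl⟩
    have hiΔ : Δ i b ≠ 0 := by rw [← deltaIB_eq hdiag hB' hbB i]; exact hiB
    have hjΔ : Δ j b ≠ 0 := by rw [← deltaIB_eq hdiag hB' hbB j]; exact hjB
    have hbA : b ∉ A := by
      intro hbA
      have : A = {j | StructId F Δ b j} := homPart_eq hA hB' hbA hbB
      have hiB' : i ∈ {j | StructId F Δ b j} := this ▸ hUA.1 hiU
      have := deltaIB_eq hdiag hB' hiB' i
      rw [hdiag] at this
      exact hiB this
    exact hUA.2 b hbA j hjU i hiU hjΔ hiΔ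
  -- Second claim: surjectivity
  have surj : ∀ i ∈ U, ∃ B, IsHomPart F Δ B ∧ deltaUB Δ U B ≠ 0 ∧
      deltaIB Δ i B ≠ 0 := by
    intro i hiU
    obtain ⟨j, hj⟩ := hnind i
    refine ⟨{k | StructId F Δ j k}, ⟨j, rfl⟩, ?_, ?_⟩
    · have hiB : deltaIB Δ i {k | StructId F Δ j k} ≠ 0 := by
        rw [deltaIB_eq hdiag ⟨j, rfl⟩ (structId_refl j) i]; exact hj
      have hex : ∃ i ∈ U, deltaIB Δ i {k | StructId F Δ j k} ≠ 0 := ⟨i, hiU, hiB⟩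
      rw [deltaUB, dif_pos hex]
      exact hex.choose_spec.2
    · rw [deltaIB_eq hdiag ⟨j, rfl⟩ (structId_refl j) i]; exact hj
  refine ⟨key, surj, ?_, ?_⟩
  · -- cardinality
    set S : Set (Set (Fin N)) := {B | IsHomPart F Δ B ∧ deltaUB Δ U B ≠ 0} with hS
    set f : Fin N → Set (Fin N) := fun i =>
      if h : ∃ B, IsHomPart F Δ B ∧ deltaUB Δ U B ≠ 0 ∧ deltaIB Δ i B ≠ 0
      then h.choose else ∅ with hf
    have hfspec : ∀ i ∈ U, IsHomPart F Δ (f i) ∧ deltaUB Δ U (f i) ≠ 0 ∧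
        deltaIB Δ i (f i) ≠ 0 := by
      intro i hiU
      have h := surj i hiU
      simp only [hf, dif_pos h]
      exact h.choose_spec
    refine Set.ncard_le_ncard_of_injOn f (fun i hi => ?_) ?_ (Set.toFinite _)
    · exact ⟨(hfspec i hi).1, (hfspec i hi).2.1⟩
    · intro i hi j hj hij
      obtain ⟨h1, h2, h3⟩ := hfspec i hi
      obtain ⟨h1', h2', h3'⟩ := hfspec j hj
      obtain ⟨k, _, hk⟩ := key (f i) h1 h2
      rw [hk i ⟨hi, h3⟩, hk j ⟨hj, hij ▸ h3'⟩]
  · -- B ≠ A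
    intro B hB hUB hBA
    subst hBA
    obtain ⟨i, ⟨hiU, hiB⟩, _⟩ := key B hB hUB
    have : deltaIB Δ i B = Δ i i := deltaIB_eq hdiag hB (hUA.1 hiU) i
    rw [hdiag] at this
    exact hiB this

end NeuralNet
end

section
/- Let U be a unit-candidate contained in a homogeneous part A of a network satisfying the standing assumptions, and let B be any homogeneous part. Then exactly one of the following holds: either Δ i h = 0 for every i ∈ U and every h ∈ B (this case necessarily occurs when B = A), or there exist a unique i ∈ U and a real number c ≠ 0 such that Δ i h = c for every h ∈ B, and Δ j h = 0 for every j ∈ U with j ≠ i and every h ∈ B. (Proposition 'Units', part (iv): existence and uniqueness of the inter-unit weight Δ_{U,B}.) -/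
namespace NeuralNet

open Classical

lemma structid_symm {α : Type*} {N : ℕ} {F : Fin N → α} {Δ : Fin N → Fin N → ℝ}
    {i j : Fin N} (h : StructId F Δ i j) : StructId F Δ j i := by
  rcases h with h | ⟨h1, h2, h3, h4⟩
  · exact Or.inl h.symm
  · exact Or.inr ⟨h1.symm, h3, h2, fun g hg1 hg2 => (h4 g hg2 hg1).symm⟩

lemma structid_trans {α : Type*} {N : ℕ} {F : Fin N → α} {Δ : Fin N → Fin N → ℝ}
    {i j k : Fin N} (hij : StructId F Δ i j) (hjk : StructId F Δ j k) :
    StructId F Δ i k := by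
  by_cases hik : i = k
  · exact Or.inl hik
  by_cases h1 : i = j
  · subst h1; exact hjk
  by_cases h2 : j = k
  · subst h2; exact hij
  rcases hij with h | ⟨f1, z1, z2, e1⟩; · exact absurd h h1
  rcases hjk with h | ⟨f2, z3, z4, e2⟩; · exact absurd h h2
  refine Or.inr ⟨f1.trans f2, ?_, ?_, ?_⟩
  · rw [← e2 i h1 hik]; exact z1
  · rw [e1 k (fun h => hik h.symm) (fun h => h2 h.symm)]; exact z4
  · intro g hg1 hg2
    by_cases hgj : g = j
    · subst hgj; rw [z2, z3]
    · rw [e1 g hg1 hgj, e2 g hgj hg2]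

/-- for a unit-candidate `U ⊆ A` and a homogeneous part `B`, exactly one of
the following holds: all actions from `U` to `B` vanish (necessarily so when `B = A`),
or there is a unique `i ∈ U` acting on all of `B` with a common nonzero value `c`, while
all other members of `U` act trivially on `B`. -/
theorem interunit_weight_dichotomy {α : Type*} {N : ℕ} (F : Fin N → α)
    (Δ : Fin N → Fin N → ℝ) (hN : 2 ≤ N) (hdiag : ∀ i, Δ i i = 0) (hnind : ∀ i, ∃ j, Δ i j ≠ 0)
    (A U B : Set (Fin N)) (hA : IsHomPart F Δ A) (hUA : UnitCandidate Δ A U)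
    (hB : IsHomPart F Δ B) :
    Xor' (∀ i ∈ U, ∀ h ∈ B, Δ i h = 0)
      (∃! i, i ∈ U ∧ ∃ c : ℝ, c ≠ 0 ∧ (∀ h ∈ B, Δ i h = c) ∧
        ∀ j ∈ U, j ≠ i → ∀ h ∈ B, Δ j h = 0) ∧
    (B = A → ∀ i ∈ U, ∀ h ∈ B, Δ i h = 0) := by
  obtain ⟨a, hAeq⟩ := hA
  obtain ⟨b, hBeq⟩ := hB
  have hbB : b ∈ B := by rw [hBeq]; exact Or.inl rfl
  have hinB : ∀ i ∈ B, ∀ h ∈ B, Δ i h = 0 := by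
    intro i hi h hh
    rw [hBeq] at hi hh
    rcases structid_trans (structid_symm hi) hh with heq | ⟨-, z, -, -⟩
    · subst heq; exact hdiag i
    · exact z
  have hconst : ∀ i ∉ B, ∀ h ∈ B, Δ i h = Δ i b := by
    intro i hi h hh
    have hhB := hh
    rw [hBeq] at hh
    rcases hh with rfl | ⟨-, -, -, e⟩
    · rfl
    · have hib : i ≠ b := fun h' => hi (h' ▸ hbB)
      have hih : i ≠ h := fun h' => hi (h' ▸ hhB)
      exact (e i hib hih).symm
  have hBAimp : B = A → ∀ i ∈ U, ∀ h ∈ B, Δ i h = 0 := by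
    intro hBA i hi h hh
    exact hinB i (by rw [hBA]; exact hUA.1 hi) h hh
  by_cases hP : ∀ i ∈ U, ∀ h ∈ B, Δ i h = 0
  · refine ⟨Or.inl ⟨hP, ?_⟩, hBAimp⟩
    rintro ⟨i, ⟨hiU, c, hc, hch, -⟩, -⟩
    exact hc (by rw [← hch b hbB]; exact hP i hiU b hbB)
  · push_neg at hP
    obtain ⟨i0, hi0U, h0, hh0B, hne⟩ := hP
    have hBA : B ≠ A := fun h => hne (hBAimp h i0 hi0U h0 hh0B)
    have hdisj : ∀ h ∈ B, h ∉ A := by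
      intro h hhB hhA
      apply hBA
      rw [hBeq] at hhB
      rw [hAeq] at hhA
      rw [hBeq, hAeq]
      ext x
      simp only [Set.mem_setOf_eq]
      constructor
      · intro hx; exact structid_trans (structid_trans hhA (structid_symm hhB)) hx
      · intro hx; exact structid_trans (structid_trans hhB (structid_symm hhA)) hx
    have hi0B : i0 ∉ B := fun h => hdisj i0 h (hUA.1 hi0U)
    have hcne : Δ i0 b ≠ 0 := by
      intro h
      exact hne ((hconst i0 hi0B h0 hh0B).trans h)
    have hmain : ∀ j ∈ U, j ≠ i0 → ∀ h ∈ B, Δ j h = 0 := by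
      intro j hjU hji h hh
      by_contra hnz
      refine hji (hUA.2 h (hdisj h hh) j hjU i0 hi0U hnz ?_)
      rw [hconst i0 hi0B h hh]; exact hcne
    refine ⟨Or.inr ⟨⟨i0, ⟨hi0U, Δ i0 b, hcne, fun h hh => hconst i0 hi0B h hh, hmain⟩, ?_⟩,
      fun hP0 => hne (hP0 i0 hi0U h0 hh0B)⟩, hBAimp⟩
    rintro y ⟨hyU, c', hc', hyh, -⟩
    refine hUA.2 b (hdisj b hbB) y hyU i0 hi0U ?_ hcne
    rw [hyh b hbB]; exact hc'

end NeuralNet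
end
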